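/- Regularization does not change local maximizers even without semicontinuity: for any ρ > 0, a point x̄ ∈ X is a local maximizer of θ over X if and only if x̄ is a local maximizer of x ↦ θ(x) − (ρ/2)‖x − x̄‖₂² over X, provided X has the local star-shape property at x̄ and the hypograph of θ has the local star-shape property at (x̄, θ(x̄)). -/

import Mathlib

open Topology

/-- Local star-shape property of a set `S` at a point `s̄ ∈ S`. -/
def LocallyStarShapedAt {E : Type*} [AddCommGroup E] [Module ℝ E] [TopologicalSpace E]
    (S : Set E) (sbar : E) : Prop :=
  ∃ N ∈ 𝓝 sbar, ∀ s ∈ S ∩ N, ∃ τbar > (0 : ℝ), ∀ τ ∈ Set.Icc (0 : ℝ) τbar,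
    sbar + τ • (s - sbar) ∈ S

theorem regularization_preserves_local_max {n : ℕ}
    (X : Set (EuclideanSpace ℝ (Fin n))) (θ : EuclideanSpace ℝ (Fin n) → ℝ)
    (xbar : EuclideanSpace ℝ (Fin n)) (hx : xbar ∈ X) (ρ : ℝ) (hρ : 0 < ρ)
    (hXstar : LocallyStarShapedAt X xbar)
    (hhypo : LocallyStarShapedAt {p : EuclideanSpace ℝ (Fin n) × ℝ | p.2 ≤ θ p.1}
      (xbar, θ xbar)) :
    IsLocalMaxOn θ X xbar ↔
      IsLocalMaxOn (fun x => θ x - ρ / 2 * ‖x - xbar‖ ^ 2) X xbar := by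
  constructor
  · intro h
    filter_upwards [h] with x hx2
    simp only [sub_self, norm_zero]
    have h1 : (0:ℝ) ≤ ρ / 2 * ‖x - xbar‖ ^ 2 := by positivity
    simp only [ne_eq, OfNat.ofNat_ne_zero, not_false_eq_true, zero_pow, mul_zero, sub_zero]
    linarith
  · intro h
    obtain ⟨N₁, hN₁, hstarX⟩ := hXstar
    obtain ⟨N₂, hN₂, hstarH⟩ := hhypo
    rw [mem_nhds_prod_iff] at hN₂
    obtain ⟨U, hU, V, hV, hUV⟩ := hN₂
    obtain ⟨εV, hεV, hballV⟩ := Metric.mem_nhds_iff.mp hV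
    have h' : ∀ᶠ x in 𝓝 xbar, x ∈ X →
        θ x - ρ / 2 * ‖x - xbar‖ ^ 2 ≤ θ xbar - ρ / 2 * ‖xbar - xbar‖ ^ 2 :=
      eventually_nhdsWithin_iff.mp h
    obtain ⟨ε, hε, hballM⟩ := Metric.eventually_nhds_iff.mp h'
    rw [IsLocalMaxOn, IsMaxFilter, eventually_nhdsWithin_iff]
    filter_upwards [hN₁, hU] with x hxN₁ hxU hxX
    by_contra hcon
    push_neg at hcon
    -- hcon : θ xbar < θ x
    have hxne : x ≠ xbar := by
      intro hcontra; rw [hcontra] at hcon; exact lt_irrefl _ hcon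
    set c : ℝ := ‖x - xbar‖ with hc
    have hcpos : 0 < c := by
      simp only [hc, norm_pos_iff]
      exact sub_ne_zero_of_ne hxne
    set δ : ℝ := min (θ x - θ xbar) (εV / 2) with hδ
    have hδpos : 0 < δ := lt_min (by linarith) (by linarith)
    -- (x, θ xbar + δ) is in the hypograph and in N₂
    have hmem : ((x, θ xbar + δ) : EuclideanSpace ℝ (Fin n) × ℝ) ∈
        {p : EuclideanSpace ℝ (Fin n) × ℝ | p.2 ≤ θ p.1} := by
      have := min_le_left (θ x - θ xbar) (εV / 2)
      simp only [Set.mem_setOf_eq]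
      linarith
    have hmemN₂ : ((x, θ xbar + δ) : EuclideanSpace ℝ (Fin n) × ℝ) ∈ N₂ := by
      apply hUV
      constructor
      · exact hxU
      · apply hballV
        simp only [Metric.mem_ball, Real.dist_eq]
        have : |θ xbar + δ - θ xbar| = δ := by
          rw [abs_of_pos]; ring; linarith
        rw [this]
        have := min_le_right (θ x - θ xbar) (εV / 2)
        linarith
    obtain ⟨τ₂, hτ₂pos, hτ₂⟩ := hstarH (x, θ xbar + δ) ⟨hmem, hmemN₂⟩
    obtain ⟨τ₁, hτ₁pos, hτ₁⟩ := hstarX x ⟨hxX, hxN₁⟩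
    -- choose the magic τ
    set τ : ℝ := min (min τ₁ τ₂) (min (ε / (2 * c)) (δ / (ρ * c ^ 2))) with hτdef
    have hτpos : 0 < τ := by
      apply lt_min (lt_min hτ₁pos hτ₂pos)
      apply lt_min <;> positivity
    set xτ : EuclideanSpace ℝ (Fin n) := xbar + τ • (x - xbar) with hxτ
    have hτle₁ : τ ≤ τ₁ := le_trans (min_le_left _ _) (min_le_left _ _)
    have hτle₂ : τ ≤ τ₂ := le_trans (min_le_left _ _) (min_le_right _ _)
    have hτleε : τ ≤ ε / (2 * c) := le_trans (min_le_right _ _) (min_le_left _ _)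
    have hτleδ : τ ≤ δ / (ρ * c ^ 2) := le_trans (min_le_right _ _) (min_le_right _ _)
    have hxτX : xτ ∈ X := hτ₁ τ ⟨le_of_lt hτpos, hτle₁⟩
    have hnorm : ‖xτ - xbar‖ = τ * c := by
      rw [hxτ]
      simp only [add_sub_cancel_left, norm_smul, Real.norm_eq_abs,
        abs_of_pos hτpos]
      rfl
    have hdist : dist xτ xbar < ε := by
      rw [dist_eq_norm, hnorm]
      have h1 : τ * c ≤ ε / (2 * c) * c := by
        apply mul_le_mul_of_nonneg_right hτleε (le_of_lt hcpos)
      have h2 : ε / (2 * c) * c = ε / 2 := by field_simp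
      linarith
    have hreg : θ xτ - ρ / 2 * ‖xτ - xbar‖ ^ 2 ≤ θ xbar - ρ / 2 * ‖xbar - xbar‖ ^ 2 :=
      hballM hdist hxτX
    have hhyp := hτ₂ τ ⟨le_of_lt hτpos, hτle₂⟩
    simp only [Set.mem_setOf_eq, Prod.smul_mk, Prod.mk_add_mk, Prod.snd_add,
      Prod.fst_add, Prod.smul_snd, Prod.smul_fst, Prod.mk_sub_mk] at hhyp
    -- hhyp : θ xbar + τ • (θ xbar + δ - θ xbar) ≤ θ (xbar + τ • (x - xbar))
    have hhyp' : θ xbar + τ * δ ≤ θ xτ := by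
      have : τ • (θ xbar + δ - θ xbar) = τ * δ := by
        rw [smul_eq_mul]; ring_nf
      rw [hxτ]
      calc θ xbar + τ * δ = θ xbar + τ • (θ xbar + δ - θ xbar) := by rw [this]
        _ ≤ _ := hhyp
    rw [hnorm, sub_self, norm_zero] at hreg
    have hsq : (τ * c) ^ 2 = τ ^ 2 * c ^ 2 := by ring
    have hkey : τ * δ ≤ ρ / 2 * τ ^ 2 * c ^ 2 := by nlinarith
    have hτδ : ρ / 2 * τ * c ^ 2 ≤ δ / 2 := by
      have := mul_le_mul_of_nonneg_left hτleδ (le_of_lt (by positivity : (0:ℝ) < ρ / 2 * c ^ 2))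
      have heq : ρ / 2 * c ^ 2 * (δ / (ρ * c ^ 2)) = δ / 2 := by field_simp
      nlinarith
    nlinarith
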